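/- Let ψ = (1/√d)∑ₖ √αₖ e^{iπ(θₖ+nₖ)} eₖ be a unit vector in ℂ^d with αₖ ≥ 0, ∑ₖ αₖ = d, θₖ ∈ [−1/2,1/2], nₖ ∈ {0,1}. Then the likelihood L(ψ) = (∏ₖ |⟨eₖ,ψ⟩|²)·(∏_{j<k} |⟨(eⱼ+ieₖ)/√2, ψ⟩|²·|⟨(eⱼ−ieₖ)/√2, ψ⟩|²) equals (1/(d^d (2d)^{d²−d}))·(∏ₖ αₖ)·(∏_{j<k} (αⱼ² + αₖ² + 2αⱼαₖ cos(2π(θⱼ−θₖ+nⱼ−nₖ)))). -/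

import Mathlib

open Finset

lemma stmt_15_key1 (a b x y : ℝ) :
    Complex.normSq ((a:ℂ) * Complex.exp (Complex.I * x) + b * Complex.exp (Complex.I * y))
      = a^2 + b^2 + 2*a*b*Real.cos (x - y) := by
  rw [mul_comm Complex.I (x:ℂ), mul_comm Complex.I (y:ℂ), Complex.exp_mul_I, Complex.exp_mul_I,
    Real.cos_sub]
  simp [Complex.normSq_apply, Complex.cos_ofReal_re, Complex.sin_ofReal_re]
  nlinarith [Real.sin_sq_add_cos_sq x, Real.sin_sq_add_cos_sq y]

lemma stmt_15_cardsum (d : ℕ) :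
    (∑ j : Fin d, (Finset.univ.filter (fun k => j < k)).card) * 2 = d^2 - d := by
  have h : ∀ j : Fin d, (Finset.univ.filter (fun k => j < k)) = Finset.Ioi j := by
    intro j; ext k; simp
  simp_rw [h, Fin.card_Ioi]
  rw [Fin.sum_univ_eq_sum_range (fun j => d - 1 - j)]
  have hr := Finset.sum_range_reflect (fun i => i) d
  rw [hr, Finset.sum_range_id_mul_two, Nat.mul_sub, mul_one, sq]

/-- The likelihood of one set of basic observations: measuring each `|e_k⟩⟨e_k|` once and
each `|(e_j ± i e_k)/√2⟩⟨(e_j ± i e_k)/√2|` once for `j < k`. -/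
noncomputable def basicLikelihood {d : ℕ} (ψ : EuclideanSpace ℂ (Fin d)) : ℝ :=
  (∏ k, ‖(inner ℂ (EuclideanSpace.single k (1 : ℂ)) ψ : ℂ)‖ ^ 2) *
  ∏ j, ∏ k ∈ Finset.univ.filter (fun k => j < k),
    (‖(inner ℂ ((Real.sqrt 2 : ℂ)⁻¹ • (EuclideanSpace.single j (1 : ℂ)
        + Complex.I • EuclideanSpace.single k (1 : ℂ))) ψ : ℂ)‖ ^ 2 *
     ‖(inner ℂ ((Real.sqrt 2 : ℂ)⁻¹ • (EuclideanSpace.single j (1 : ℂ)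
        - Complex.I • EuclideanSpace.single k (1 : ℂ))) ψ : ℂ)‖ ^ 2)

theorem stmt_15 (d : ℕ) (hd : 0 < d) (α θ : Fin d → ℝ) (nn : Fin d → ℕ)
    (hα0 : ∀ k, 0 ≤ α k) (hαsum : ∑ k, α k = (d : ℝ))
    (hθ : ∀ k, θ k ∈ Set.Icc (-(1 / 2) : ℝ) (1 / 2))
    (hn : ∀ k, nn k = 0 ∨ nn k = 1)
    (ψ : EuclideanSpace ℂ (Fin d))
    (hψ : ∀ k, ψ k = ((Real.sqrt (α k) / Real.sqrt d : ℝ) : ℂ) *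
      Complex.exp (Complex.I * (Real.pi : ℂ) * ((θ k : ℂ) + (nn k : ℂ)))) :
    basicLikelihood ψ =
      1 / ((d : ℝ) ^ d * (2 * d : ℝ) ^ (d ^ 2 - d)) * (∏ k, α k) *
        ∏ j, ∏ k ∈ Finset.univ.filter (fun k => j < k),
          (α j ^ 2 + α k ^ 2 + 2 * α j * α k *
            Real.cos (2 * Real.pi * (θ j - θ k + (nn j : ℝ) - (nn k : ℝ)))) := by
  have hd' : (0:ℝ) < d := by exact_mod_cast hd
  have hdiag : ∀ k, ‖(inner ℂ (EuclideanSpace.single k (1 : ℂ)) ψ : ℂ)‖ ^ 2 = α k / d := by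
    intro k
    rw [EuclideanSpace.inner_single_left]
    simp only [map_one, one_mul, hψ k]
    have harg : Complex.I * (Real.pi : ℂ) * ((θ k : ℂ) + (nn k : ℂ))
        = ((Real.pi * (θ k + nn k) : ℝ) : ℂ) * Complex.I := by push_cast; ring
    rw [harg, norm_mul, Complex.norm_exp_ofReal_mul_I, mul_one, Complex.norm_real,
      Real.norm_eq_abs, sq_abs, div_pow, Real.sq_sqrt (hα0 k), Real.sq_sqrt hd'.le]
  have hψsq : ∀ k, ψ k ^ 2 = ((α k / d : ℝ):ℂ) *
      Complex.exp (Complex.I * ((2 * Real.pi * (θ k + nn k) : ℝ):ℂ)) := by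
    intro k
    rw [hψ k, mul_pow, ← Complex.exp_nat_mul]
    have h1 : (((Real.sqrt (α k) / Real.sqrt d : ℝ)):ℂ)^2 = ((α k / d : ℝ):ℂ) := by
      rw [← Complex.ofReal_pow, div_pow, Real.sq_sqrt (hα0 k), Real.sq_sqrt hd'.le]
    rw [h1]
    congr 1
    push_cast
    ring
  have hpair : ∀ j k : Fin d,
      (‖(inner ℂ ((Real.sqrt 2 : ℂ)⁻¹ • (EuclideanSpace.single j (1 : ℂ)
          + Complex.I • EuclideanSpace.single k (1 : ℂ))) ψ : ℂ)‖ ^ 2 *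
       ‖(inner ℂ ((Real.sqrt 2 : ℂ)⁻¹ • (EuclideanSpace.single j (1 : ℂ)
          - Complex.I • EuclideanSpace.single k (1 : ℂ))) ψ : ℂ)‖ ^ 2)
        = (α j ^ 2 + α k ^ 2 + 2 * α j * α k *
            Real.cos (2 * Real.pi * (θ j - θ k + (nn j : ℝ) - (nn k : ℝ)))) / (2*d)^2 := by
    intro j k
    have hin1 : (inner ℂ ((Real.sqrt 2 : ℂ)⁻¹ • (EuclideanSpace.single j (1 : ℂ)
          + Complex.I • EuclideanSpace.single k (1 : ℂ))) ψ : ℂ)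
        = ((Real.sqrt 2:ℝ):ℂ)⁻¹ * (ψ j - Complex.I * ψ k) := by
      rw [inner_smul_left, inner_add_left, inner_smul_left, EuclideanSpace.inner_single_left,
        EuclideanSpace.inner_single_left]
      simp [Complex.conj_I]
      ring
    have hin2 : (inner ℂ ((Real.sqrt 2 : ℂ)⁻¹ • (EuclideanSpace.single j (1 : ℂ)
          - Complex.I • EuclideanSpace.single k (1 : ℂ))) ψ : ℂ)
        = ((Real.sqrt 2:ℝ):ℂ)⁻¹ * (ψ j + Complex.I * ψ k) := by
      rw [inner_smul_left, inner_sub_left, inner_smul_left, EuclideanSpace.inner_single_left,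
        EuclideanSpace.inner_single_left]
      simp [Complex.conj_I]
    rw [hin1, hin2, Complex.sq_norm, Complex.sq_norm,
      ← Complex.normSq_mul]
    have hmul : ((Real.sqrt 2:ℝ):ℂ)⁻¹ * (ψ j - Complex.I * ψ k)
        * (((Real.sqrt 2:ℝ):ℂ)⁻¹ * (ψ j + Complex.I * ψ k))
        = (((2:ℝ)⁻¹:ℝ):ℂ) * (((α j / d : ℝ):ℂ)
            * Complex.exp (Complex.I * ((2 * Real.pi * (θ j + nn j) : ℝ):ℂ))
          + ((α k / d : ℝ):ℂ)
            * Complex.exp (Complex.I * ((2 * Real.pi * (θ k + nn k) : ℝ):ℂ))) := by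
      have h2 : ((Real.sqrt 2:ℝ):ℂ)⁻¹ * ((Real.sqrt 2:ℝ):ℂ)⁻¹ = (((2:ℝ)⁻¹:ℝ):ℂ) := by
        rw [← mul_inv, ← Complex.ofReal_mul, Real.mul_self_sqrt (by norm_num)]
        push_cast
        ring
      calc ((Real.sqrt 2:ℝ):ℂ)⁻¹ * (ψ j - Complex.I * ψ k)
          * (((Real.sqrt 2:ℝ):ℂ)⁻¹ * (ψ j + Complex.I * ψ k))
          = ((Real.sqrt 2:ℝ):ℂ)⁻¹ * ((Real.sqrt 2:ℝ):ℂ)⁻¹ * (ψ j ^ 2 + ψ k ^ 2) := by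
            have : (ψ j - Complex.I * ψ k) * (ψ j + Complex.I * ψ k) = ψ j ^ 2 + ψ k ^ 2 := by
              linear_combination (-(ψ k)^2) * Complex.I_sq
            linear_combination ((Real.sqrt 2:ℝ):ℂ)⁻¹ * ((Real.sqrt 2:ℝ):ℂ)⁻¹ * this
        _ = _ := by rw [h2, hψsq j, hψsq k]
    rw [hmul, Complex.normSq_mul, Complex.normSq_ofReal, stmt_15_key1]
    have hcos : 2 * Real.pi * (θ j + nn j) - 2 * Real.pi * (θ k + nn k)
        = 2 * Real.pi * (θ j - θ k + (nn j : ℝ) - (nn k : ℝ)) := by ring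
    rw [hcos]
    field_simp
  unfold basicLikelihood
  rw [Finset.prod_congr rfl fun k _ => hdiag k]
  rw [Finset.prod_congr rfl fun j _ => Finset.prod_congr rfl fun k _ => hpair j k]
  rw [Finset.prod_div_distrib, Finset.prod_const, Finset.card_univ, Fintype.card_fin]
  simp_rw [div_eq_mul_inv, Finset.prod_mul_distrib, Finset.prod_const]
  rw [Finset.prod_pow_eq_pow_sum]
  have hN : ((((2:ℝ) * d) ^ 2)⁻¹) ^ (∑ j : Fin d, (Finset.univ.filter (fun k : Fin d => j < k)).card)
      = ((2 * (d:ℝ)) ^ (d^2 - d))⁻¹ := by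
    rw [← inv_pow, ← pow_mul, mul_comm 2 (∑ j : Fin d, _), stmt_15_cardsum d, inv_pow]
  rw [hN]
  have h2d : (0:ℝ) < (2 * (d:ℝ)) ^ (d^2 - d) := by positivity
  have hdd : (0:ℝ) < (d:ℝ) ^ d := by positivity
  field_simp
  ring
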